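/- Let α₀ ∈ ℂ, U ⊆ ℂ open connected, and let (q₁, p₁, q₂, p₂) be differentiable functions on U solving the t-flow of the autonomous system (A1): q₁' = q₁² + p₂, p₁' = −2 q₁ p₁ − 3α₀, q₂' = −(1/2) p₂² + p₁, p₂' = q₂. Then both K₁(q₁(t), p₁(t), q₂(t), p₂(t)) and K₂(q₁(t), p₁(t), q₂(t), p₂(t)) are constant on U, where K₁ = q₁² p₁ + 3α₀ q₁ − q₂²/2 − p₂³/6 + p₁ p₂ and K₂ = p₁³/9 − (3α₀/2) q₂ p₂² + 3α₀² p₂ + α₀ p₁ q₂ + 3α₀ q₁ q₂² − (1/3) p₁² p₂² + (2/3) q₁ p₁² q₂ + (1/4) p₁ p₂⁴ + q₁² p₁ q₂² − q₁ p₁ q₂ p₂². That is, K₁ and K₂ are first integrals of the t-flow of (A1). -/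

import Mathlib

/-- `(q₁,p₁,q₂,p₂)` solves the `t`-flow of the autonomous system (A1) with
parameter `α₀` on `U`: `q₁' = q₁² + p₂`, `p₁' = -2q₁p₁ - 3α₀`,
`q₂' = -(1/2)p₂² + p₁`, `p₂' = q₂`. -/
def SolvesA1 (a0 : ℂ) (U : Set ℂ) (q1 p1 q2 p2 : ℂ → ℂ) : Prop :=
  ∀ t ∈ U,
    HasDerivAt q1 (q1 t ^ 2 + p2 t) t ∧
    HasDerivAt p1 (-2 * q1 t * p1 t - 3 * a0) t ∧
    HasDerivAt q2 (-(1/2) * p2 t ^ 2 + p1 t) t ∧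
    HasDerivAt p2 (q2 t) t

/-- The Hamiltonian `K₁` of the autonomous system (A1). -/
noncomputable def K1 (a0 q1 p1 q2 p2 : ℂ) : ℂ :=
  q1 ^ 2 * p1 + 3 * a0 * q1 - q2 ^ 2 / 2 - p2 ^ 3 / 6 + p1 * p2

/-- The Hamiltonian `K₂` of the autonomous system (A1). -/
noncomputable def K2 (a0 q1 p1 q2 p2 : ℂ) : ℂ :=
  p1 ^ 3 / 9 - (3 * a0 / 2) * q2 * p2 ^ 2 + 3 * a0 ^ 2 * p2 + a0 * p1 * q2
    + 3 * a0 * q1 * q2 ^ 2 - (1/3) * p1 ^ 2 * p2 ^ 2 + (2/3) * q1 * p1 ^ 2 * q2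
    + (1/4) * p1 * p2 ^ 4 + q1 ^ 2 * p1 * q2 ^ 2 - q1 * p1 * q2 * p2 ^ 2


lemma const_of_hasDerivAt_zero {f : ℂ → ℂ} {U : Set ℂ} (hU : IsOpen U)
    (hconn : IsPreconnected U) (hf : ∀ t ∈ U, HasDerivAt f 0 t) :
    ∀ s ∈ U, ∀ t ∈ U, f s = f t := by
  intro s hs t ht
  have hlocal : ∀ x ∈ U, ∃ r > 0, Metric.ball x r ⊆ U ∧
      ∀ y ∈ Metric.ball x r, f y = f x := by
    intro x hx
    obtain ⟨r, hr, hball⟩ := Metric.isOpen_iff.mp hU x hx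
    refine ⟨r, hr, hball, fun y hy => ?_⟩
    have key := (convex_ball x r).norm_image_sub_le_of_norm_hasFDerivWithin_le
      (f' := fun _ => (0 : ℂ →L[ℂ] ℂ)) (C := 0)
      (fun z hz => by
        have h0 : HasFDerivAt f (0 : ℂ →L[ℂ] ℂ) z := by
          have h1 := (hf z (hball hz)).hasFDerivAt
          convert h1 using 1
          all_goals try rfl
          ext
          simp
        exact h0.hasFDerivWithinAt)
      (fun z _ => by simp) (Metric.mem_ball_self hr) hy
    rw [zero_mul] at key
    exact sub_eq_zero.mp (norm_le_zero_iff.mp key)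
  by_contra hne
  set V : Set ℂ := {x | x ∈ U ∧ f x = f s} with hVdef
  set W : Set ℂ := {x | x ∈ U ∧ f x ≠ f s} with hWdef
  have hVopen : IsOpen V := by
    rw [Metric.isOpen_iff]
    rintro x ⟨hxU, hfx⟩
    obtain ⟨r, hr, hball, hconst⟩ := hlocal x hxU
    exact ⟨r, hr, fun y hy => ⟨hball hy, (hconst y hy).trans hfx⟩⟩
  have hWopen : IsOpen W := by
    rw [Metric.isOpen_iff]
    rintro x ⟨hxU, hfx⟩
    obtain ⟨r, hr, hball, hconst⟩ := hlocal x hxU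
    exact ⟨r, hr, fun y hy => ⟨hball hy, (hconst y hy).symm ▸ hfx⟩⟩
  obtain ⟨z, hzU, hzV, hzW⟩ := hconn V W hVopen hWopen
    (fun x hx => by by_cases hc : f x = f s
                    · exact Or.inl ⟨hx, hc⟩
                    · exact Or.inr ⟨hx, hc⟩)
    ⟨s, hs, hs, rfl⟩ ⟨t, ht, ht, fun hc => hne hc.symm⟩
  exact hzW.2 hzV.2

/-- `K₁` and `K₂` are first integrals of the `t`-flow of the
autonomous system (A1): they are constant along any solution on an open
connected set `U`. -/
theorem stmt14 (a0 : ℂ) (U : Set ℂ) (hU : IsOpen U) (hUconn : IsConnected U)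
    (q1 p1 q2 p2 : ℂ → ℂ) (h : SolvesA1 a0 U q1 p1 q2 p2) :
    ∀ s ∈ U, ∀ t ∈ U,
      K1 a0 (q1 s) (p1 s) (q2 s) (p2 s) = K1 a0 (q1 t) (p1 t) (q2 t) (p2 t) ∧
      K2 a0 (q1 s) (p1 s) (q2 s) (p2 s) = K2 a0 (q1 t) (p1 t) (q2 t) (p2 t) := by
  intro s hs t ht
  constructor
  · refine const_of_hasDerivAt_zero
      (f := fun x => K1 a0 (q1 x) (p1 x) (q2 x) (p2 x))
      hU hUconn.isPreconnected (fun z hz => ?_) s hs t ht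
    obtain ⟨hq1, hp1, hq2, hp2⟩ := h z hz
    have H := (((((hq1.pow 2).mul hp1).add (hq1.const_mul (3*a0))).sub
        ((hq2.pow 2).div_const 2)).sub ((hp2.pow 3).div_const 6)).add (hp1.mul hp2)
    unfold K1
    convert H using 1
    all_goals try rfl
    push_cast [Pi.pow_apply, Pi.mul_apply]
    ring
  · refine const_of_hasDerivAt_zero
      (f := fun x => K2 a0 (q1 x) (p1 x) (q2 x) (p2 x))
      hU hUconn.isPreconnected (fun z hz => ?_) s hs t ht
    obtain ⟨hq1, hp1, hq2, hp2⟩ := h z hz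
    have H := ((((((((((hp1.pow 3).div_const 9).sub
        ((hq2.const_mul (3*a0/2)).mul (hp2.pow 2))).add
        (hp2.const_mul (3*a0^2))).add
        ((hp1.const_mul a0).mul hq2)).add
        ((hq1.const_mul (3*a0)).mul (hq2.pow 2))).sub
        (((hp1.pow 2).const_mul (1/3)).mul (hp2.pow 2))).add
        (((hq1.const_mul (2/3)).mul (hp1.pow 2)).mul hq2)).add
        ((hp1.const_mul (1/4)).mul (hp2.pow 4))).add
        (((hq1.pow 2).mul hp1).mul (hq2.pow 2))).sub
        (((hq1.mul hp1).mul hq2).mul (hp2.pow 2))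
    unfold K2
    convert H using 1
    all_goals try rfl
    push_cast [Pi.pow_apply, Pi.mul_apply]
    ring
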